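/- Fix a degree sequence D and let T be a tree that minimizes the Sombor index among all trees with degree sequence D. Then for every path v₁v₂…v_t in T with t ≥ 4 and deg(v₁) < deg(v_t), it holds that deg(v₂) ≤ deg(v_{t−1}). -/

import Mathlib

open SimpleGraph

/-- Degree of a vertex. -/
noncomputable def deg {V : Type*} (G : SimpleGraph V) (v : V) : ℕ :=
  Nat.card (G.neighborSet v)

/-- Sombor index. -/
noncomputable def somborIndex {V : Type*} (G : SimpleGraph V) : ℝ :=
  ∑ᶠ e ∈ G.edgeSet,
    Sym2.lift ⟨fun u v => Real.sqrt ((deg G u : ℝ) ^ 2 + (deg G v : ℝ) ^ 2),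
      fun u v => by simp [add_comm]⟩ e

/-- Multiset of degrees of non-pendant vertices. -/
noncomputable def degSeq {V : Type*} [Fintype V] (G : SimpleGraph V) : Multiset ℕ :=
  ((Finset.univ : Finset V).filter (fun v => deg G v ≠ 1)).val.map (deg G)

def pathCondition {V : Type*} (G : SimpleGraph V) : Prop :=
  ∀ ⦃u v : V⦄ (p : G.Walk u v), p.IsPath → 3 ≤ p.length →
    deg G u < deg G v → deg G (p.getVert 1) ≤ deg G (p.getVert (p.length - 1))

def attachPendants {V : Type*} (G : SimpleGraph V) (v : V) (k : ℕ) :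
    SimpleGraph (V ⊕ Fin k) where
  Adj x y :=
    match x, y with
    | Sum.inl a, Sum.inl b => G.Adj a b
    | Sum.inl a, Sum.inr _ => a = v
    | Sum.inr _, Sum.inl b => b = v
    | Sum.inr _, Sum.inr _ => False
  symm := by
    constructor
    rintro (a | i) (b | j) h
    · exact h.symm
    · exact h
    · exact h
    · exact h.elim
  loopless := by
    constructor
    rintro (a | i) h
    · exact G.irrefl h
    · exact h

private lemma sqrt_diff_eq {b c x : ℝ} (hc : 0 ≤ c) (hcb : c < b) :
    Real.sqrt (x^2 + b^2) - Real.sqrt (x^2 + c^2)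
      = (b^2 - c^2) / (Real.sqrt (x^2 + b^2) + Real.sqrt (x^2 + c^2)) := by
  have h1 : (Real.sqrt (x^2 + b^2))^2 = x^2 + b^2 := Real.sq_sqrt (by positivity)
  have h2 : (Real.sqrt (x^2 + c^2))^2 = x^2 + c^2 := Real.sq_sqrt (by positivity)
  have hb : 0 < b := lt_of_le_of_lt hc hcb
  have hpos : 0 < Real.sqrt (x^2 + b^2) + Real.sqrt (x^2 + c^2) := by
    have : 0 < Real.sqrt (x^2 + b^2) := Real.sqrt_pos.2 (by positivity)
    have := Real.sqrt_nonneg (x^2 + c^2)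
    linarith
  rw [eq_div_iff (ne_of_gt hpos)]
  nlinarith [h1, h2]

private lemma sqrt_ineq {a b c d : ℝ} (ha : 0 ≤ a) (hc : 0 ≤ c) (had : a < d) (hcb : c < b) :
    Real.sqrt (a^2 + c^2) + Real.sqrt (b^2 + d^2)
      < Real.sqrt (a^2 + b^2) + Real.sqrt (c^2 + d^2) := by
  have hd : 0 ≤ d := le_of_lt (lt_of_le_of_lt ha had)
  have e1 := sqrt_diff_eq hc hcb (x := a)
  have e2 := sqrt_diff_eq hc hcb (x := d)
  have hnum : 0 < b^2 - c^2 := by nlinarith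
  have hden1 : Real.sqrt (a^2 + b^2) < Real.sqrt (d^2 + b^2) :=
    Real.sqrt_lt_sqrt (by positivity) (by nlinarith)
  have hden2 : Real.sqrt (a^2 + c^2) < Real.sqrt (d^2 + c^2) :=
    Real.sqrt_lt_sqrt (by positivity) (by nlinarith)
  have hposA : 0 < Real.sqrt (a^2 + b^2) + Real.sqrt (a^2 + c^2) := by
    have : 0 < Real.sqrt (a^2 + b^2) := Real.sqrt_pos.2 (by nlinarith)
    have := Real.sqrt_nonneg (a^2 + c^2); linarith
  have hlt : (b^2 - c^2) / (Real.sqrt (d^2 + b^2) + Real.sqrt (d^2 + c^2))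
      < (b^2 - c^2) / (Real.sqrt (a^2 + b^2) + Real.sqrt (a^2 + c^2)) :=
    div_lt_div_of_pos_left hnum hposA (by linarith)
  rw [← e1, ← e2] at hlt
  have hbd : Real.sqrt (b^2 + d^2) = Real.sqrt (d^2 + b^2) := by rw [add_comm]
  have hcd : Real.sqrt (c^2 + d^2) = Real.sqrt (d^2 + c^2) := by rw [add_comm]
  rw [hbd, hcd]
  linarith

private lemma swap_acyclic {V : Type*} {H : SimpleGraph V} (hH : H.IsAcyclic) {u w : V}
    (hnr : ¬ H.Reachable u w) :
    (H ⊔ fromEdgeSet {s(u,w)}).IsAcyclic := by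
  intro x p hp
  by_cases he : s(u, w) ∈ p.edges
  · have h := adj_and_reachable_delete_edges_iff_exists_cycle.mpr ⟨x, p, hp, he⟩
    refine hnr (h.2.mono ?_)
    calc (H ⊔ fromEdgeSet {s(u,w)}) \ fromEdgeSet {s(u,w)}
        = H \ fromEdgeSet {s(u,w)} := sup_sdiff_right_self
      _ ≤ H := sdiff_le
  · have hedges : ∀ e ∈ p.edges, e ∈ H.edgeSet := by
      intro e hep
      have := p.edges_subset_edgeSet hep
      rw [edgeSet_sup, edgeSet_fromEdgeSet] at this
      rcases this with h | h
      · exact h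
      · exact absurd (by simpa using h.1 : e = s(u,w)) (fun h' => he (h' ▸ hep))
    exact hH (p.transfer H hedges) (hp.transfer hedges)

private lemma reach_of_adj {V : Type*} {G G' : SimpleGraph V}
    (h : ∀ x y, G.Adj x y → G'.Reachable x y) {x y : V} (r : G.Reachable x y) :
    G'.Reachable x y := by
  obtain ⟨p⟩ := r
  induction p with
  | nil => exact Reachable.refl _
  | cons h' p ih => exact (h _ _ h').trans ih

private lemma deg_iso {V W : Type*} {G : SimpleGraph V} {G' : SimpleGraph W} (φ : G ≃g G')
    (v : V) : deg G' (φ v) = deg G v :=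
  (Nat.card_congr (φ.mapNeighborSet v)).symm

private lemma isTree_iso {V W : Type*} {G : SimpleGraph V} {G' : SimpleGraph W} (φ : G ≃g G')
    (hG : G.IsTree) : G'.IsTree := by
  refine ⟨φ.connected_iff.mp hG.1, ?_⟩
  intro v p hp
  have hinj : Function.Injective ⇑φ.symm.toHom := φ.symm.toEquiv.injective
  exact hG.2 (p.map φ.symm.toHom) ((Walk.map_isCycle_iff_of_injective hinj).mpr hp)

private lemma sombor_iso {V W : Type*} {G : SimpleGraph V} {G' : SimpleGraph W} (φ : G ≃g G') :
    somborIndex G = somborIndex G' := by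
  unfold somborIndex
  refine finsum_mem_eq_of_bijOn (Sym2.map ⇑φ) ⟨?_, ?_, ?_⟩ ?_
  · intro e he
    exact (Iso.map_mem_edgeSet_iff φ).mpr he
  · intro e _ e' _ hee
    exact Sym2.map.injective φ.toEquiv.injective hee
  · intro e' he'
    refine ⟨Sym2.map ⇑φ.symm e', (Iso.map_mem_edgeSet_iff φ.symm).mpr he', ?_⟩
    rw [Sym2.map_map]
    convert congr_fun Sym2.map_id e'
    simp
    rfl
  · intro e he
    induction e with
    | h u v =>
      simp only [Sym2.map_pair_eq, Sym2.lift_mk]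
      rw [deg_iso φ, deg_iso φ]

private lemma degSeq_iso {V W : Type*} [Fintype V] [Fintype W] {G : SimpleGraph V}
    {G' : SimpleGraph W} (φ : G ≃g G') : degSeq G' = degSeq G := by
  unfold degSeq
  have huniv : (Finset.univ : Finset W) = Finset.univ.map φ.toEquiv.toEmbedding :=
    (Finset.map_univ_equiv φ.toEquiv).symm
  rw [huniv, Finset.filter_map, Finset.map_val, Multiset.map_map]
  have h1 : ∀ v : V, deg G' (φ.toEquiv.toEmbedding v) = deg G v := fun v => deg_iso φ v
  have hfil : Finset.filter ((fun w => deg G' w ≠ 1) ∘ φ.toEquiv.toEmbedding) Finset.univ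
      = Finset.filter (fun v => deg G v ≠ 1) Finset.univ := by
    apply Finset.filter_congr
    intro v _
    rw [Function.comp_apply, h1 v]
  rw [hfil]
  exact Multiset.map_congr rfl fun v _ => h1 v

private lemma degSeq_congr {V : Type*} [Fintype V] {G G' : SimpleGraph V}
    (h : ∀ x, deg G' x = deg G x) : degSeq G' = degSeq G := by
  unfold degSeq
  have hfil : Finset.filter (fun v => deg G' v ≠ 1) Finset.univ
      = Finset.filter (fun v => deg G v ≠ 1) Finset.univ :=
    Finset.filter_congr fun v _ => by rw [h v]
  rw [hfil]
  exact Multiset.map_congr rfl fun v _ => h v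

private lemma deg_eq_of_swap_neighbors {V : Type*} [Fintype V] {G G' : SimpleGraph V}
    {x b c : V} (h : G'.neighborSet x = insert c (G.neighborSet x \ {b}))
    (hb : b ∈ G.neighborSet x) (hc : c ∉ G.neighborSet x) : deg G' x = deg G x := by
  rw [deg, deg, h, Nat.card_coe_set_eq, Nat.card_coe_set_eq]
  have hfin : (G.neighborSet x).Finite := Set.toFinite _
  rw [Set.ncard_insert_of_notMem (fun hm => hc hm.1) hfin.diff]
  have := Set.ncard_diff_singleton_add_one hb hfin
  omega
set_option maxHeartbeats 2000000 in
theorem minimizer_pathCondition {V : Type*} [Fintype V] (T : SimpleGraph V) (hT : T.IsTree)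
    (D : List ℕ) (hsort : D.Pairwise (· ≥ ·)) (hD : ∀ d ∈ D, 2 ≤ d)
    (hdeg : degSeq T = ↑D)
    (hmin : ∀ (n : ℕ) (T' : SimpleGraph (Fin n)), T'.IsTree → degSeq T' = ↑D →
      somborIndex T ≤ somborIndex T') :
    pathCondition T := by
  classical
  intro u v p hp hlen hduv
  by_contra hcon
  push_neg at hcon
  obtain ⟨b, hb_def⟩ : ∃ b, p.getVert 1 = b := ⟨_, rfl⟩
  obtain ⟨c, hc_def⟩ : ∃ c, p.getVert (p.length - 1) = c := ⟨_, rfl⟩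
  rw [hb_def, hc_def] at hcon
  -- basic adjacencies
  have hnil : ¬ p.Nil := by rw [Walk.not_nil_iff_lt_length]; omega
  have hab : T.Adj u b := hb_def ▸ p.adj_snd hnil
  have hcd : T.Adj c v := by
    have h := p.adj_getVert_succ (i := p.length - 1) (by omega)
    have h1 : p.length - 1 + 1 = p.length := by omega
    rw [h1, Walk.getVert_length, hc_def] at h
    exact h
  -- the middle walk from c to b avoiding u and v
  have hq2 : ∃ q : T.Walk c b, q.IsPath ∧ u ∉ q.support ∧ v ∉ q.support := by
    have hp1 : p.tail.IsPath := hp.tail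
    have hlen1 : p.tail.length = p.length - 1 := by
      have := Walk.length_tail_add_one hnil; omega
    have hanot : u ∉ p.tail.support := by
      have hsup := Walk.cons_support_tail hnil
      have hnodup := hp.support_nodup
      rw [← hsup] at hnodup
      exact (List.nodup_cons.mp hnodup).1
    have hnil2 : ¬ p.tail.reverse.Nil := by
      rw [Walk.not_nil_iff_lt_length, Walk.length_reverse]; omega
    have hc' : p.tail.reverse.getVert 1 = c := by
      rw [Walk.getVert_reverse, hlen1, Walk.getVert_tail _, ← hc_def]
      congr 1
      omega
    refine ⟨(p.tail.reverse.tail.copy hc' hb_def), ?_, ?_, ?_⟩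
    · exact Walk.isPath_copy _ _ _ |>.mpr (hp1.reverse.tail)
    · rw [Walk.support_copy]
      intro hmem
      have h2 : p.tail.reverse.tail.support = p.tail.reverse.support.tail :=
        Walk.support_tail_of_not_nil _ hnil2
      rw [h2] at hmem
      have : u ∈ p.tail.reverse.support := List.mem_of_mem_tail hmem
      rw [Walk.support_reverse, List.mem_reverse] at this
      exact hanot this
    · rw [Walk.support_copy]
      intro hmem
      have hsup := Walk.cons_support_tail hnil2
      have hnodup := hp1.reverse.support_nodup
      rw [← hsup] at hnodup
      exact (List.nodup_cons.mp hnodup).1 hmem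
  obtain ⟨q, hqpath, huq, hvq⟩ := hq2
  -- distinctness of the four vertices
  have hub : u ≠ b := hab.ne
  have hcv : c ≠ v := hcd.ne
  have huv : u ≠ v := fun h => by rw [h] at hduv; exact lt_irrefl _ hduv
  have hbc : b ≠ c := fun h => by rw [h] at hcon; exact lt_irrefl _ hcon
  have huc : u ≠ c := fun h => huq (h ▸ q.start_mem_support)
  have hbv : b ≠ v := fun h => hvq (h ▸ q.end_mem_support)
  -- edges
  have hne12 : s(u, b) ≠ s(c, v) := by
    intro h
    rcases Sym2.eq_iff.mp h with ⟨h1, h2⟩ | ⟨h1, h2⟩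
    · exact huc h1
    · exact huv h1
  have hne34 : s(u, c) ≠ s(b, v) := by
    intro h
    rcases Sym2.eq_iff.mp h with ⟨h1, h2⟩ | ⟨h1, h2⟩
    · exact hub h1
    · exact huv h1
  have hne14 : s(u, b) ≠ s(b, v) := by
    intro h
    rcases Sym2.eq_iff.mp h with ⟨h1, h2⟩ | ⟨h1, h2⟩
    · exact hub h1
    · exact huv h1
  -- edges of q avoid s(u,b) and s(c,v)
  have hq_e1 : s(u, b) ∉ q.edges := fun h => huq (q.fst_mem_support_of_mem_edges h)
  have hq_e2 : s(c, v) ∉ q.edges := fun h => hvq (q.snd_mem_support_of_mem_edges h)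
  -- non-adjacency of u,c and b,v in T
  have hnac : ¬ T.Adj u c := by
    intro hadj
    have hW1 : (Walk.cons hadj Walk.nil : T.Walk u c).IsPath := by
      rw [Walk.cons_isPath_iff]
      exact ⟨Walk.IsPath.nil, by simp [huc]⟩
    have hW2 : (Walk.cons hab q.reverse : T.Walk u c).IsPath := by
      rw [Walk.cons_isPath_iff]
      refine ⟨hqpath.reverse, ?_⟩
      rw [Walk.support_reverse, List.mem_reverse]
      exact huq
    obtain ⟨W, _, hun⟩ := hT.existsUnique_path u c
    have heq : (Walk.cons hadj Walk.nil : T.Walk u c) = Walk.cons hab q.reverse :=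
      (hun _ hW1).trans (hun _ hW2).symm
    have hlen := congrArg Walk.length heq
    simp only [Walk.length_cons, Walk.length_nil, Walk.length_reverse] at hlen
    have : q.Nil := Walk.nil_iff_length_eq.mpr (by omega)
    exact hbc this.eq.symm
  have hnbd : ¬ T.Adj b v := by
    intro hadj
    have hW1 : (Walk.cons hadj.symm Walk.nil : T.Walk v b).IsPath := by
      rw [Walk.cons_isPath_iff]
      exact ⟨Walk.IsPath.nil, by simp [Ne.symm hbv]⟩
    have hW2 : (Walk.cons hcd.symm q : T.Walk v b).IsPath := by
      rw [Walk.cons_isPath_iff]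
      exact ⟨hqpath, hvq⟩
    obtain ⟨W, _, hun⟩ := hT.existsUnique_path v b
    have heq : (Walk.cons hadj.symm Walk.nil : T.Walk v b) = Walk.cons hcd.symm q :=
      (hun _ hW1).trans (hun _ hW2).symm
    have hlen := congrArg Walk.length heq
    simp only [Walk.length_cons, Walk.length_nil] at hlen
    have : q.Nil := Walk.nil_iff_length_eq.mpr (by omega)
    exact hbc this.eq.symm
  -- the swapped graph
  obtain ⟨T', hT'_def⟩ : ∃ T' : SimpleGraph V,
      T' = (T \ fromEdgeSet {s(u, b), s(c, v)}) ⊔ fromEdgeSet {s(u, c), s(b, v)} := ⟨_, rfl⟩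
  have hT'adj : ∀ x y : V, T'.Adj x y ↔
      ((T.Adj x y ∧ s(x, y) ≠ s(u, b) ∧ s(x, y) ≠ s(c, v)) ∨
        ((s(x, y) = s(u, c) ∨ s(x, y) = s(b, v)) ∧ x ≠ y)) := by
    intro x y
    rw [hT'_def]
    simp only [sup_adj, sdiff_adj, fromEdgeSet_adj, Set.mem_insert_iff, Set.mem_singleton_iff]
    constructor
    · rintro (⟨hA, hn⟩ | hr)
      · exact Or.inl ⟨hA, fun p => hn ⟨Or.inl p, hA.ne⟩, fun p => hn ⟨Or.inr p, hA.ne⟩⟩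
      · exact Or.inr hr
    · rintro (⟨hA, h1, h2⟩ | hr)
      · exact Or.inl ⟨hA, fun h => h.1.elim h1 h2⟩
      · exact Or.inr hr
  -- intermediate graphs
  obtain ⟨H1, hH1_def⟩ : ∃ H1 : SimpleGraph V, H1 = T \ fromEdgeSet {s(c, v)} := ⟨_, rfl⟩
  obtain ⟨T1, hT1_def⟩ : ∃ T1 : SimpleGraph V, T1 = H1 ⊔ fromEdgeSet {s(b, v)} := ⟨_, rfl⟩
  obtain ⟨H2, hH2_def⟩ : ∃ H2 : SimpleGraph V, H2 = T1 \ fromEdgeSet {s(u, b)} := ⟨_, rfl⟩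
  have hT'T2 : T' = H2 ⊔ fromEdgeSet {s(u, c)} := by
    rw [hT'_def, hH2_def, hT1_def, hH1_def]
    ext x y
    simp only [sup_adj, sdiff_adj, fromEdgeSet_adj, Set.mem_insert_iff, Set.mem_singleton_iff]
    have h14 : s(x, y) = s(u, b) → s(x, y) = s(b, v) → False := fun h1 h2 => hne14 (h1 ▸ h2)
    constructor
    · rintro (⟨hA, hn⟩ | ⟨h3 | h4, hxy⟩)
      · exact Or.inl ⟨Or.inl ⟨hA, fun h => hn ⟨Or.inr h.1, h.2⟩⟩, fun h => hn ⟨Or.inl h.1, h.2⟩⟩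
      · exact Or.inr ⟨h3, hxy⟩
      · exact Or.inl ⟨Or.inr ⟨h4, hxy⟩, fun h => h14 h.1 h4⟩
    · rintro (⟨(⟨hA, hn2⟩ | h4), hn1⟩ | h3)
      · exact Or.inl ⟨hA, fun h => h.1.elim (fun p => hn1 ⟨p, h.2⟩) (fun p => hn2 ⟨p, h.2⟩)⟩
      · exact Or.inr ⟨Or.inr h4.1, h4.2⟩
      · exact Or.inr ⟨Or.inl h3.1, h3.2⟩
  -- q transfers into H1
  have hqH1 : ∀ e ∈ q.edges, e ∈ H1.edgeSet := by
    intro e he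
    rw [hH1_def, edgeSet_sdiff, edgeSet_fromEdgeSet]
    refine ⟨q.edges_subset_edgeSet he, ?_⟩
    intro hmem
    exact hq_e2 (by simpa using hmem.1 ▸ he)
  have hH1leT1 : H1 ≤ T1 := hT1_def ▸ le_sup_left
  have hqT1 : ∀ e ∈ q.edges, e ∈ T1.edgeSet := fun e he =>
    edgeSet_subset_edgeSet.mpr hH1leT1 (hqH1 e he)
  -- H1 is acyclic
  have hH1le : H1 ≤ T := hH1_def ▸ sdiff_le
  have hH1ac : H1.IsAcyclic := fun x w hw =>
    hT.2 (Walk.mapLe hH1le w) ((Walk.mapLe_isCycle hH1le).mpr hw)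
  -- b and v are not reachable in H1
  have hnrbv : ¬ H1.Reachable b v := by
    intro hr
    have hcb : H1.Reachable c b := ⟨q.transfer H1 hqH1⟩
    have hcv' : (T \ fromEdgeSet {s(c, v)}).Reachable c v := by
      rw [← hH1_def]; exact hcb.trans hr
    obtain ⟨x, w, hw, _⟩ := adj_and_reachable_delete_edges_iff_exists_cycle.mp ⟨hcd, hcv'⟩
    exact hT.2 w hw
  -- T1 is a tree
  have hT1ac : T1.IsAcyclic := hT1_def ▸ swap_acyclic hH1ac hnrbv
  have hT1adj_bv : T1.Adj b v := by
    rw [hT1_def]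
    exact Or.inr ((fromEdgeSet_adj _).mpr ⟨rfl, hbv⟩)
  have hT1adj_of : ∀ x y : V, T.Adj x y → s(x, y) ≠ s(c, v) → T1.Adj x y := by
    intro x y hxy hne
    rw [hT1_def, hH1_def]
    left
    refine ⟨hxy, ?_⟩
    rw [fromEdgeSet_adj]
    rintro ⟨h1, -⟩
    exact hne (by simpa using h1)
  have hT1conn : T1.Connected := by
    haveI : Nonempty V := ⟨u⟩
    rw [connected_iff]
    refine ⟨fun x y => ?_, inferInstance⟩
    refine reach_of_adj ?_ (hT.1.preconnected x y)
    intro x y hxy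
    by_cases h2 : s(x, y) = s(c, v)
    · have hreach_cv : T1.Reachable c v :=
        ⟨(q.transfer T1 hqT1).concat hT1adj_bv⟩
      rcases Sym2.eq_iff.mp h2 with ⟨rfl, rfl⟩ | ⟨rfl, rfl⟩
      · exact hreach_cv
      · exact hreach_cv.symm
    · exact (hT1adj_of x y hxy h2).reachable
  have hT1tree : T1.IsTree := ⟨hT1conn, hT1ac⟩
  -- u and c are not reachable in H2
  have hH2leT1 : H2 ≤ T1 := hH2_def ▸ sdiff_le
  have hT1adj_ub : T1.Adj u b := hT1adj_of u b hab hne12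
  have hnrac : ¬ H2.Reachable u c := by
    intro hr
    obtain ⟨w0⟩ := hr
    have hπ : (w0.toPath : H2.Walk u c).IsPath := w0.toPath.isPath
    have hπT1 : ∀ e ∈ (w0.toPath : H2.Walk u c).edges, e ∈ T1.edgeSet := fun e he =>
      edgeSet_subset_edgeSet.mpr hH2leT1 ((w0.toPath : H2.Walk u c).edges_subset_edgeSet he)
    have hP : (Walk.cons hT1adj_ub (q.transfer T1 hqT1).reverse : T1.Walk u c).IsPath := by
      rw [Walk.cons_isPath_iff]
      constructor
      · exact (hqpath.transfer hqT1).reverse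
      · rw [Walk.support_reverse, List.mem_reverse, Walk.support_transfer]
        exact huq
    obtain ⟨W, _, hun⟩ := hT1tree.existsUnique_path u c
    have heq : ((w0.toPath : H2.Walk u c).transfer T1 hπT1)
        = Walk.cons hT1adj_ub (q.transfer T1 hqT1).reverse :=
      (hun _ (hπ.transfer hπT1)).trans (hun _ hP).symm
    have hmem : s(u, b) ∈ ((w0.toPath : H2.Walk u c).transfer T1 hπT1).edges := by
      rw [heq, Walk.edges_cons]
      exact List.mem_cons_self
    rw [Walk.edges_transfer] at hmem
    have : s(u, b) ∈ H2.edgeSet := (w0.toPath : H2.Walk u c).edges_subset_edgeSet hmem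
    rw [hH2_def, edgeSet_sdiff, edgeSet_fromEdgeSet] at this
    exact this.2 ⟨rfl, by simp [hub]⟩
  -- H2 acyclic, hence T' acyclic
  have hH2ac : H2.IsAcyclic := fun x w hw =>
    hT1ac (Walk.mapLe hH2leT1 w) ((Walk.mapLe_isCycle hH2leT1).mpr hw)
  have hT'ac : T'.IsAcyclic := hT'T2 ▸ swap_acyclic hH2ac hnrac
  -- T' is connected
  have hqT' : ∀ e ∈ q.edges, e ∈ T'.edgeSet := by
    intro e he
    induction e with
    | h x y =>
      rw [mem_edgeSet, hT'adj]
      left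
      refine ⟨q.edges_subset_edgeSet he, fun h1 => hq_e1 (h1 ▸ he), fun h2 => hq_e2 (h2 ▸ he)⟩
  have hT'adj_uc : T'.Adj u c := (hT'adj u c).mpr (Or.inr ⟨Or.inl rfl, huc⟩)
  have hT'adj_bv : T'.Adj b v := (hT'adj b v).mpr (Or.inr ⟨Or.inr rfl, hbv⟩)
  have hT'conn : T'.Connected := by
    haveI : Nonempty V := ⟨u⟩
    rw [connected_iff]
    refine ⟨fun x y => ?_, inferInstance⟩
    refine reach_of_adj ?_ (hT.1.preconnected x y)
    intro x y hxy
    by_cases h1 : s(x, y) = s(u, b)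
    · have hreach : T'.Reachable u b := hT'adj_uc.reachable.trans ⟨q.transfer T' hqT'⟩
      rcases Sym2.eq_iff.mp h1 with ⟨rfl, rfl⟩ | ⟨rfl, rfl⟩
      · exact hreach
      · exact hreach.symm
    · by_cases h2 : s(x, y) = s(c, v)
      · have hreach : T'.Reachable c v := ⟨(q.transfer T' hqT').concat hT'adj_bv⟩
        rcases Sym2.eq_iff.mp h2 with ⟨rfl, rfl⟩ | ⟨rfl, rfl⟩
        · exact hreach
        · exact hreach.symm
      · exact ((hT'adj x y).mpr (Or.inl ⟨hxy, h1, h2⟩)).reachable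
  have hT'tree : T'.IsTree := ⟨hT'conn, hT'ac⟩
  -- neighbor sets of the four special vertices
  have hNu : T'.neighborSet u = insert c (T.neighborSet u \ {b}) := by
    ext y
    simp only [mem_neighborSet, Set.mem_insert_iff, Set.mem_diff, Set.mem_singleton_iff, hT'adj]
    constructor
    · rintro (⟨hA, h1, h2⟩ | ⟨h3 | h4, hxy⟩)
      · exact Or.inr ⟨hA, fun hyb => h1 (by rw [hyb])⟩
      · rcases Sym2.eq_iff.mp h3 with ⟨-, rfl⟩ | ⟨h', -⟩
        · exact Or.inl rfl
        · exact absurd h' huc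
      · rcases Sym2.eq_iff.mp h4 with ⟨h', -⟩ | ⟨h', -⟩
        · exact absurd h' hub
        · exact absurd h' huv
    · rintro (rfl | ⟨hA, hyb⟩)
      · exact Or.inr ⟨Or.inl rfl, huc⟩
      · refine Or.inl ⟨hA, ?_, ?_⟩
        · intro h
          rcases Sym2.eq_iff.mp h with ⟨-, h'⟩ | ⟨h', -⟩
          · exact hyb h'
          · exact hub h'
        · intro h
          rcases Sym2.eq_iff.mp h with ⟨h', -⟩ | ⟨h', -⟩
          · exact huc h'
          · exact huv h'
  have hNb : T'.neighborSet b = insert v (T.neighborSet b \ {u}) := by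
    ext y
    simp only [mem_neighborSet, Set.mem_insert_iff, Set.mem_diff, Set.mem_singleton_iff, hT'adj]
    constructor
    · rintro (⟨hA, h1, h2⟩ | ⟨h3 | h4, hxy⟩)
      · exact Or.inr ⟨hA, fun hyu => h1 (by rw [hyu, Sym2.eq_swap])⟩
      · rcases Sym2.eq_iff.mp h3 with ⟨h', -⟩ | ⟨h', -⟩
        · exact absurd h'.symm hub
        · exact absurd h' hbc
      · rcases Sym2.eq_iff.mp h4 with ⟨-, rfl⟩ | ⟨h', -⟩
        · exact Or.inl rfl
        · exact absurd h' hbv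
    · rintro (rfl | ⟨hA, hyu⟩)
      · exact Or.inr ⟨Or.inr rfl, hbv⟩
      · refine Or.inl ⟨hA, ?_, ?_⟩
        · intro h
          rcases Sym2.eq_iff.mp h with ⟨h', -⟩ | ⟨-, h'⟩
          · exact hub h'.symm
          · exact hyu h'
        · intro h
          rcases Sym2.eq_iff.mp h with ⟨h', -⟩ | ⟨h', -⟩
          · exact hbc h'
          · exact hbv h'
  have hNc : T'.neighborSet c = insert u (T.neighborSet c \ {v}) := by
    ext y
    simp only [mem_neighborSet, Set.mem_insert_iff, Set.mem_diff, Set.mem_singleton_iff, hT'adj]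
    constructor
    · rintro (⟨hA, h1, h2⟩ | ⟨h3 | h4, hxy⟩)
      · exact Or.inr ⟨hA, fun hyv => h2 (by rw [hyv])⟩
      · rcases Sym2.eq_iff.mp h3 with ⟨h', -⟩ | ⟨-, rfl⟩
        · exact absurd h'.symm huc
        · exact Or.inl rfl
      · rcases Sym2.eq_iff.mp h4 with ⟨h', -⟩ | ⟨h', -⟩
        · exact absurd h'.symm hbc
        · exact absurd h' hcv
    · rintro (rfl | ⟨hA, hyv⟩)
      · exact Or.inr ⟨Or.inl Sym2.eq_swap, Ne.symm huc⟩
      · refine Or.inl ⟨hA, ?_, ?_⟩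
        · intro h
          rcases Sym2.eq_iff.mp h with ⟨h', -⟩ | ⟨h', -⟩
          · exact huc h'.symm
          · exact hbc h'.symm
        · intro h
          rcases Sym2.eq_iff.mp h with ⟨-, h'⟩ | ⟨h', -⟩
          · exact hyv h'
          · exact hcv h'
  have hNv : T'.neighborSet v = insert b (T.neighborSet v \ {c}) := by
    ext y
    simp only [mem_neighborSet, Set.mem_insert_iff, Set.mem_diff, Set.mem_singleton_iff, hT'adj]
    constructor
    · rintro (⟨hA, h1, h2⟩ | ⟨h3 | h4, hxy⟩)
      · exact Or.inr ⟨hA, fun hyc => h2 (by rw [hyc, Sym2.eq_swap])⟩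
      · rcases Sym2.eq_iff.mp h3 with ⟨h', -⟩ | ⟨h', -⟩
        · exact absurd h'.symm huv
        · exact absurd h'.symm hcv
      · rcases Sym2.eq_iff.mp h4 with ⟨h', -⟩ | ⟨-, rfl⟩
        · exact absurd h'.symm hbv
        · exact Or.inl rfl
    · rintro (rfl | ⟨hA, hyc⟩)
      · exact Or.inr ⟨Or.inr Sym2.eq_swap, Ne.symm hbv⟩
      · refine Or.inl ⟨hA, ?_, ?_⟩
        · intro h
          rcases Sym2.eq_iff.mp h with ⟨h', -⟩ | ⟨h', -⟩
          · exact huv h'.symm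
          · exact hbv h'.symm
        · intro h
          rcases Sym2.eq_iff.mp h with ⟨h', -⟩ | ⟨-, h'⟩
          · exact hcv h'.symm
          · exact hyc h'
  have hNother : ∀ x : V, x ≠ u → x ≠ b → x ≠ c → x ≠ v →
      T'.neighborSet x = T.neighborSet x := by
    intro x hxu hxb hxc hxv
    ext y
    simp only [mem_neighborSet, hT'adj]
    constructor
    · rintro (⟨hA, -, -⟩ | ⟨h3 | h4, hxy⟩)
      · exact hA
      · rcases Sym2.eq_iff.mp h3 with ⟨h', -⟩ | ⟨h', -⟩
        · exact absurd h' hxu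
        · exact absurd h' hxc
      · rcases Sym2.eq_iff.mp h4 with ⟨h', -⟩ | ⟨h', -⟩
        · exact absurd h' hxb
        · exact absurd h' hxv
    · intro hA
      refine Or.inl ⟨hA, ?_, ?_⟩
      · intro h
        rcases Sym2.eq_iff.mp h with ⟨h', -⟩ | ⟨h', -⟩
        · exact hxu h'
        · exact hxb h'
      · intro h
        rcases Sym2.eq_iff.mp h with ⟨h', -⟩ | ⟨h', -⟩
        · exact hxc h'
        · exact hxv h'
  -- all degrees are preserved
  have hdegall : ∀ x : V, deg T' x = deg T x := by
    intro x
    by_cases hxu : x = u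
    · subst hxu
      exact deg_eq_of_swap_neighbors hNu hab (fun h => hnac h)
    by_cases hxb : x = b
    · subst hxb
      exact deg_eq_of_swap_neighbors hNb hab.symm (fun h => hnbd h)
    by_cases hxc : x = c
    · subst hxc
      exact deg_eq_of_swap_neighbors hNc hcd (fun h => hnac (adj_symm T h))
    by_cases hxv : x = v
    · subst hxv
      exact deg_eq_of_swap_neighbors hNv hcd.symm (fun h => hnbd (adj_symm T h))
    rw [deg, deg, hNother x hxu hxb hxc hxv]
  -- the weight function
  obtain ⟨w, hw⟩ : ∃ w : Sym2 V → ℝ, ∀ x y : V,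
      w s(x, y) = Real.sqrt ((deg T x : ℝ) ^ 2 + (deg T y : ℝ) ^ 2) :=
    ⟨Sym2.lift ⟨fun x y => Real.sqrt ((deg T x : ℝ) ^ 2 + (deg T y : ℝ) ^ 2),
      fun x y => by simp [add_comm]⟩, fun x y => by simp⟩
  have hfinT : T.edgeSet.Finite := T.edgeSet.toFinite
  have hfinT' : T'.edgeSet.Finite := T'.edgeSet.toFinite
  have hsomT : somborIndex T = ∑ e ∈ hfinT.toFinset, w e := by
    unfold somborIndex
    rw [finsum_mem_eq_finite_toFinset_sum _ hfinT]
    refine Finset.sum_congr rfl fun e he => ?_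
    induction e with
    | h x y => simp only [Sym2.lift_mk, hw]
  have hsomT' : somborIndex T' = ∑ e ∈ hfinT'.toFinset, w e := by
    unfold somborIndex
    rw [finsum_mem_eq_finite_toFinset_sum _ hfinT']
    refine Finset.sum_congr rfl fun e he => ?_
    induction e with
    | h x y => simp only [Sym2.lift_mk, hdegall, hw]
  -- edge sets
  have hedgesets : T'.edgeSet = (T.edgeSet \ {s(u, b), s(c, v)}) ∪ {s(u, c), s(b, v)} := by
    ext e
    induction e with
    | h x y =>
      simp only [Set.mem_union, Set.mem_diff, Set.mem_insert_iff, Set.mem_singleton_iff,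
        mem_edgeSet, hT'adj]
      constructor
      · rintro (⟨hA, h1, h2⟩ | ⟨h34, -⟩)
        · exact Or.inl ⟨hA, fun h => h.elim h1 h2⟩
        · exact Or.inr h34
      · rintro (⟨hA, h12⟩ | (h3 | h4))
        · exact Or.inl ⟨hA, fun h => h12 (Or.inl h), fun h => h12 (Or.inr h)⟩
        · refine Or.inr ⟨Or.inl h3, ?_⟩
          rcases Sym2.eq_iff.mp h3 with ⟨rfl, rfl⟩ | ⟨rfl, rfl⟩
          · exact huc
          · exact Ne.symm huc
        · refine Or.inr ⟨Or.inr h4, ?_⟩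
          rcases Sym2.eq_iff.mp h4 with ⟨rfl, rfl⟩ | ⟨rfl, rfl⟩
          · exact hbv
          · exact Ne.symm hbv
  have he1S : s(u, b) ∈ hfinT.toFinset := hfinT.mem_toFinset.mpr (T.mem_edgeSet.mpr hab)
  have he2S : s(c, v) ∈ hfinT.toFinset := hfinT.mem_toFinset.mpr (T.mem_edgeSet.mpr hcd)
  have he3S : s(u, c) ∉ hfinT.toFinset := fun h => hnac (T.mem_edgeSet.mp (hfinT.mem_toFinset.mp h))
  have he4S : s(b, v) ∉ hfinT.toFinset := fun h => hnbd (T.mem_edgeSet.mp (hfinT.mem_toFinset.mp h))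
  have hfs : hfinT'.toFinset
      = (hfinT.toFinset \ {s(u, b), s(c, v)}) ∪ {s(u, c), s(b, v)} := by
    ext e
    simp only [Set.Finite.mem_toFinset, hedgesets, Finset.mem_union, Finset.mem_sdiff,
      Finset.mem_insert, Finset.mem_singleton, Set.mem_union, Set.mem_diff,
      Set.mem_insert_iff, Set.mem_singleton_iff]
  have hdisj : Disjoint (hfinT.toFinset \ {s(u, b), s(c, v)})
      ({s(u, c), s(b, v)} : Finset (Sym2 V)) := by
    rw [Finset.disjoint_right]
    intro e he hmem
    have heS := (Finset.mem_sdiff.mp hmem).1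
    rcases Finset.mem_insert.mp he with rfl | he'
    · exact he3S heS
    · rw [Finset.mem_singleton.mp he'] at heS
      exact he4S heS
  have hsub : ({s(u, b), s(c, v)} : Finset (Sym2 V)) ⊆ hfinT.toFinset := by
    intro e he
    rcases Finset.mem_insert.mp he with rfl | he'
    · exact he1S
    · rw [Finset.mem_singleton.mp he']
      exact he2S
  have hsum : ∑ e ∈ hfinT'.toFinset, w e
      = ∑ e ∈ hfinT.toFinset, w e - (w s(u, b) + w s(c, v)) + (w s(u, c) + w s(b, v)) := by
    rw [hfs, Finset.sum_union hdisj, Finset.sum_sdiff_eq_sub hsub,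
      Finset.sum_pair hne12, Finset.sum_pair hne34]
  -- the strict inequality
  have key := sqrt_ineq (a := (deg T u : ℝ)) (b := (deg T b : ℝ)) (c := (deg T c : ℝ))
    (d := (deg T v : ℝ)) (Nat.cast_nonneg _) (Nat.cast_nonneg _)
    (Nat.cast_lt.mpr hduv) (Nat.cast_lt.mpr hcon)
  have hlt : somborIndex T' < somborIndex T := by
    rw [hsomT, hsomT', hsum, hw, hw, hw, hw]
    linarith
  -- transport to Fin n and derive the contradiction
  have hdegseq : degSeq T' = degSeq T := degSeq_congr hdegall
  obtain ⟨ε⟩ : Nonempty (V ≃ Fin (Fintype.card V)) := ⟨Fintype.equivFin V⟩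
  have φ : T' ≃g T'.map ε.toEmbedding := SimpleGraph.Iso.map ε T'
  have hmin' := hmin (Fintype.card V) (T'.map ε.toEmbedding) (isTree_iso φ hT'tree)
    (by rw [degSeq_iso φ, hdegseq, hdeg])
  rw [← sombor_iso φ] at hmin'
  linarith
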